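/- For any p, q ∈ (0, 1/2] with p < q, the Kullback–Leibler divergences between Bernoulli distributions satisfy KL(Ber(p) ‖ Ber(q)) ≤ KL(Ber(q) ‖ Ber(p)) ≤ (p - q)^2 / (p(1 - p)), and consequently their sum is at most 2(p - q)^2 / (p(1 - p)). -/

import Mathlib

/-- KL divergence between Bernoulli distributions with parameters `a, b ∈ (0,1)`. -/
noncomputable def klBer (a b : ℝ) : ℝ :=
  a * Real.log (a / b) + (1 - a) * Real.log ((1 - a) / (1 - b))

private lemma logA {u : ℝ} (h0 : 0 ≤ u) (h1 : u < 1) :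
    u + u^2/2 ≤ -Real.log (1-u) := by
  set g : ℝ → ℝ := fun t => t + t^2/2 + Real.log (1-t) with hg
  have key : AntitoneOn g (Set.Icc 0 u) := by
    apply antitoneOn_of_hasDerivWithinAt_nonpos (f' := fun t => 1 + t - (1-t)⁻¹)
      (convex_Icc 0 u)
    · apply ContinuousOn.add (by fun_prop)
      apply ContinuousOn.log (by fun_prop)
      intro t ht
      have := ht.2
      nlinarith [ht.1]
    · intro t ht
      rw [interior_Icc] at ht
      have h1t : (1:ℝ) - t ≠ 0 := by nlinarith [ht.1, ht.2]
      have : HasDerivAt g (1 + t - (1-t)⁻¹) t := by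
        have hlog : HasDerivAt (fun t : ℝ => Real.log (1-t)) ((0-1)/(1-t)) t :=
          ((hasDerivAt_const t (1:ℝ)).sub (hasDerivAt_id t)).log h1t
        have hpoly : HasDerivAt (fun t : ℝ => t + t^2/2) (1 + t) t := by
          have := ((hasDerivAt_id t).add (((hasDerivAt_id t).pow 2).div_const 2))
          exact this.congr_deriv (by norm_num)
        exact (hpoly.add hlog).congr_deriv (by ring)
      exact this.hasDerivWithinAt
    · intro t ht
      rw [interior_Icc] at ht
      have ht1 : t < 1 := lt_of_lt_of_le ht.2 h1.le
      have h1t : (0:ℝ) < 1 - t := by linarith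
      rw [sub_nonpos, inv_eq_one_div, le_div_iff₀ h1t]
      nlinarith [ht.1]
  have h0u : (0:ℝ) ∈ Set.Icc 0 u := ⟨le_refl 0, h0⟩
  have huu : u ∈ Set.Icc 0 u := ⟨h0, le_refl u⟩
  have := key h0u huu h0
  simp [hg] at this
  linarith

private lemma logB {a b : ℝ} (ha : 0 < a) (hab : a ≤ b) :
    (b-a)/b + (b-a)^2/(2*b^2) ≤ Real.log b - Real.log a := by
  have hb : 0 < b := lt_of_lt_of_le ha hab
  have hu0 : 0 ≤ (b-a)/b := div_nonneg (by linarith) hb.le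
  have hu1 : (b-a)/b < 1 := by rw [div_lt_one hb]; linarith
  have h := logA hu0 hu1
  have h1u : 1 - (b-a)/b = a/b := by field_simp; ring
  rw [h1u, Real.log_div (by positivity) (by positivity)] at h
  have e : (b-a)/b + ((b-a)/b)^2/2 = (b-a)/b + (b-a)^2/(2*b^2) := by
    field_simp
  linarith [e ▸ h]

private lemma derivB {p x : ℝ} (hp : 0 < p) (hpx : p ≤ x) (hx : x ≤ 1/2) :
    (x - p)*(1/x + 1/(1-x)) ≤
      (Real.log x - Real.log p) + (Real.log (1-p) - Real.log (1-x)) := by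
  have hx0 : 0 < x := lt_of_lt_of_le hp hpx
  have h1x : 0 < 1 - x := by linarith
  have h1p : 0 < 1 - p := by linarith
  have hb1 := logB hp hpx
  have hb2 := logB h1x (by linarith : 1 - x ≤ 1 - p)
  have hd : (0:ℝ) ≤ x - p := by linarith
  -- algebraic part
  have key : (x - p)*(1/x + 1/(1-x)) ≤
      ((x-p)/x + (x-p)^2/(2*x^2)) + (((1-p)-(1-x))/(1-p) + ((1-p)-(1-x))^2/(2*(1-p)^2)) := by
    have e1 : (x-p)/(1-x) = (x-p)/(1-p) + (x-p)^2/((1-x)*(1-p)) := by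
      field_simp
      ring
    have e2 : (x-p)^2/((1-x)*(1-p)) ≤ (x-p)^2/(x*(1-p)) := by
      apply div_le_div_of_nonneg_left (by positivity) (by positivity)
      have : x ≤ 1 - x := by linarith
      nlinarith
    have e3 : (x-p)^2/(x*(1-p)) ≤ (x-p)^2/(2*x^2) + (x-p)^2/(2*(1-p)^2) := by
      rw [div_add_div _ _ (by positivity) (by positivity), div_le_div_iff₀ (by positivity) (by positivity)]
      nlinarith [mul_nonneg (mul_nonneg (sq_nonneg (x-p)) (sq_nonneg (1-p-x))) (mul_pos hx0 h1p).le]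
    have e4 : (x - p)*(1/x + 1/(1-x)) = (x-p)/x + (x-p)/(1-x) := by
      field_simp
    have e5 : ((1-p)-(1-x)) = x - p := by ring
    rw [e4, e5]
    linarith
  linarith

private lemma monoAux {p : ℝ} (hp0 : 0 < p) (hp2 : p ≤ 1/2) :
    MonotoneOn (fun x => (p+x) * (Real.log x - Real.log p)
      + (2-p-x) * (Real.log (1-x) - Real.log (1-p))) (Set.Icc p (1/2)) := by
  apply monotoneOn_of_hasDerivWithinAt_nonneg (convex_Icc p (1/2))
    (f' := fun x => ((Real.log x - Real.log p) + (p+x) * (1/x))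
      + ((-1) * (Real.log (1-x) - Real.log (1-p)) + (2-p-x) * ((0-1)/(1-x))))
  · apply ContinuousOn.add
    · apply ContinuousOn.mul (by fun_prop)
      apply ContinuousOn.sub _ continuousOn_const
      apply ContinuousOn.log (by fun_prop)
      intro t ht
      exact (lt_of_lt_of_le hp0 ht.1).ne'
    · apply ContinuousOn.mul (by fun_prop)
      apply ContinuousOn.sub _ continuousOn_const
      apply ContinuousOn.log (by fun_prop)
      intro t ht
      have h1 : t ≤ 1/2 := ht.2
      have h2 : (0:ℝ) < 1 - t := by linarith
      exact h2.ne'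
  · intro x hx
    rw [interior_Icc] at hx
    have hx0 : 0 < x := lt_trans hp0 hx.1
    have h1x : (0:ℝ) < 1 - x := by have := hx.2; linarith
    have hA : HasDerivAt (fun x : ℝ => (p+x) * (Real.log x - Real.log p))
        ((1:ℝ) * (Real.log x - Real.log p) + (p+x) * (1/x)) x := by
      have h1 : HasDerivAt (fun x : ℝ => p + x) 1 x := by
        simpa using (hasDerivAt_id x).const_add p
      have h2 : HasDerivAt (fun x : ℝ => Real.log x - Real.log p) (1/x) x := by
        simpa [one_div] using (Real.hasDerivAt_log hx0.ne').sub_const (Real.log p)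
      exact h1.mul h2
    have hB : HasDerivAt (fun x : ℝ => (2-p-x) * (Real.log (1-x) - Real.log (1-p)))
        ((-1) * (Real.log (1-x) - Real.log (1-p)) + (2-p-x) * ((0-1)/(1-x))) x := by
      have h1 : HasDerivAt (fun x : ℝ => 2-p-x) (-1) x := by
        simpa using (hasDerivAt_id x).const_sub (2-p)
      have h2 : HasDerivAt (fun x : ℝ => Real.log (1-x) - Real.log (1-p)) ((0-1)/(1-x)) x := by
        simpa using (((hasDerivAt_const x (1:ℝ)).sub (hasDerivAt_id x)).log h1x.ne').sub_const
          (Real.log (1-p))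
      exact h1.mul h2
    have := hA.add hB
    have heq : (1:ℝ) * (Real.log x - Real.log p) + (p+x) * (1/x)
        + ((-1) * (Real.log (1-x) - Real.log (1-p)) + (2-p-x) * ((0-1)/(1-x)))
        = ((Real.log x - Real.log p) + (p+x) * (1/x))
        + ((-1) * (Real.log (1-x) - Real.log (1-p)) + (2-p-x) * ((0-1)/(1-x))) := by ring
    rw [heq] at this
    exact this.hasDerivWithinAt
  · intro x hx
    rw [interior_Icc] at hx
    have hx0 : 0 < x := lt_trans hp0 hx.1
    have h1x : (0:ℝ) < 1 - x := by have := hx.2; linarith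
    have hd := derivB hp0 hx.1.le hx.2.le
    have e1 : (p+x) * (1/x) = 1 + p/x + (x - p) * (1/x) - (x-p)/x := by
      field_simp
      ring
    -- simpler: show total expression ≥ 0 using hd
    have expand : ((Real.log x - Real.log p) + (p+x) * (1/x))
        + ((-1) * (Real.log (1-x) - Real.log (1-p)) + (2-p-x) * ((0-1)/(1-x)))
        = ((Real.log x - Real.log p) + (Real.log (1-p) - Real.log (1-x)))
          - (x - p)*(1/x + 1/(1-x))
          + ((p+x)/x + (x-p)/x - 2) + (2 + (x-p)/(1-x) - (2-p-x)/(1-x)) - 2 + 2 := by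
      field_simp
      ring
    have z1 : (p+x)/x + (x-p)/x - 2 = 0 := by field_simp; ring
    have z2 : (2:ℝ) + (x-p)/(1-x) - (2-p-x)/(1-x) = 0 := by
      field_simp
      ring
    rw [expand, z1, z2]
    linarith

/-- For `p, q ∈ (0, 1/2]` with `p < q`:
`KL(Ber p ‖ Ber q) ≤ KL(Ber q ‖ Ber p) ≤ (p-q)²/(p(1-p))`, and hence the sum of the
two divergences is at most `2(p-q)²/(p(1-p))`. -/
theorem bernoulli_kl_bounds (p q : ℝ) (hp : p ∈ Set.Ioc 0 (1/2 : ℝ))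
    (hq : q ∈ Set.Ioc 0 (1/2 : ℝ)) (hpq : p < q) :
    klBer p q ≤ klBer q p ∧ klBer q p ≤ (p - q) ^ 2 / (p * (1 - p)) ∧
    klBer p q + klBer q p ≤ 2 * (p - q) ^ 2 / (p * (1 - p)) := by
  obtain ⟨hp0, hp2⟩ := hp
  obtain ⟨hq0, hq2⟩ := hq
  have h1p : (0:ℝ) < 1 - p := by linarith
  have h1q : (0:ℝ) < 1 - q := by linarith
  -- rewrite klBer in terms of log differences
  have kl_eq : ∀ a b : ℝ, 0 < a → 0 < b → a < 1 → b < 1 →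
      klBer a b = a * (Real.log a - Real.log b)
        + (1-a) * (Real.log (1-a) - Real.log (1-b)) := by
    intro a b ha hb ha1 hb1
    unfold klBer
    rw [Real.log_div ha.ne' hb.ne', Real.log_div (by linarith) (by linarith)]
  have klpq := kl_eq p q hp0 hq0 (by linarith) (by linarith)
  have klqp := kl_eq q p hq0 hp0 (by linarith) (by linarith)
  -- Part 1
  have part1 : klBer p q ≤ klBer q p := by
    have hm := monoAux hp0 hp2 ⟨le_refl p, by linarith⟩ ⟨hpq.le, hq2⟩ hpq.le
    simp only [sub_self, mul_zero, add_zero, zero_add] at hm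
    rw [klpq, klqp]
    linarith
  -- Part 2
  have part2 : klBer q p ≤ (p - q) ^ 2 / (p * (1 - p)) := by
    have l1 : Real.log (q/p) ≤ q/p - 1 := Real.log_le_sub_one_of_pos (by positivity)
    have l2 : Real.log ((1-q)/(1-p)) ≤ (1-q)/(1-p) - 1 :=
      Real.log_le_sub_one_of_pos (by positivity)
    have hb : q * (q/p - 1) + (1-q) * ((1-q)/(1-p) - 1) = (p - q)^2 / (p * (1-p)) := by
      field_simp
      ring
    unfold klBer
    calc q * Real.log (q/p) + (1-q) * Real.log ((1-q)/(1-p))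
        ≤ q * (q/p - 1) + (1-q) * ((1-q)/(1-p) - 1) := by
          have := mul_le_mul_of_nonneg_left l1 hq0.le
          have := mul_le_mul_of_nonneg_left l2 h1q.le
          linarith
      _ = (p - q)^2 / (p * (1-p)) := hb
  refine ⟨part1, part2, ?_⟩
  have : 2 * (p - q)^2 / (p * (1-p)) = (p - q)^2 / (p * (1-p)) + (p - q)^2 / (p * (1-p)) := by
    ring
  linarith
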